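/- For a prime p, t > 0, α > 0, and integer r, the function Z_r(x,t) := ∫_{ℚ_p} χ(-xξ)·exp(-t·(max(|ξ|_p, p^r)^α - p^{rα})) dξ satisfies ∫_{ℚ_p} Z_r(x,t) dx = 1, and moreover Z_r(x,t) = 0 for |x|_p > p^{-r}, so that ∫_{|x|_p ≤ p^{-r}} Z_r(x,t) dx = 1. -/

import Mathlib

open MeasureTheory Filter Topology

noncomputable section

variable (p : ℕ) [Fact p.Prime]

instance : MeasurableSpace ℚ_[p] := borel _
instance : BorelSpace ℚ_[p] := ⟨rfl⟩

/-- The closed unit ball of `ℚ_[p]` (i.e. `ℤ_p`) as a positive compact set. -/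
def padicUnitBall : TopologicalSpace.PositiveCompacts ℚ_[p] where
  carrier := Metric.closedBall 0 1
  isCompact' := isCompact_closedBall 0 1
  interior_nonempty' := ⟨0, mem_interior_iff_mem_nhds.2 (Metric.closedBall_mem_nhds 0 one_pos)⟩

/-- Haar measure on `ℚ_[p]` normalized so that `ℤ_p` has measure 1. -/
def μp : Measure ℚ_[p] := Measure.addHaarMeasure (padicUnitBall p)

/-- The heat kernel `Z_r(x,t) = ∫ χ(-xξ) e^{-t(⟨ξ⟩^α - p^{rα})} dξ`, where
`⟨ξ⟩ = max(|ξ|_p, p^r)`. -/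
def heatKernel (χ : AddChar ℚ_[p] ℂ) (r : ℤ) (α t : ℝ) (x : ℚ_[p]) : ℂ :=
  ∫ ξ, χ (-(x*ξ)) *
    Complex.exp (-((t * ((max ‖ξ‖ ((p:ℝ)^r)) ^ α - (p:ℝ) ^ ((r:ℝ)*α)) : ℝ) : ℂ)) ∂(μp p)

/-- The kernel `K_α(y)`, supported on the ball `|y|_p ≤ p^{-r}`. -/
def Kfun (r : ℤ) (α : ℝ) (y : ℚ_[p]) : ℝ :=
  if ‖y‖ ≤ (p:ℝ)^(-r) then
    (1 - (p:ℝ)^α)/(1 - (p:ℝ)^(-α-1)) * ‖y‖ ^ (-α-1)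
      + (p:ℝ)^((r:ℝ)*(α+1)) * (1 - (p:ℝ)^α)/(1 - (p:ℝ)^(α+1))
  else 0

/-- `u(x,t) = ∫_{|ξ|_p ≤ 1} χ(-xξ) e^{-t(⟨ξ⟩^α - p^{rα})} dξ`, the solution with initial
datum the indicator of the unit ball. -/
def uball (χ : AddChar ℚ_[p] ℂ) (r : ℤ) (α t : ℝ) (x : ℚ_[p]) : ℂ :=
  ∫ ξ in {ξ : ℚ_[p] | ‖ξ‖ ≤ 1}, χ (-(x*ξ)) *
    Complex.exp (-((t * ((max ‖ξ‖ ((p:ℝ)^r)) ^ α - (p:ℝ) ^ ((r:ℝ)*α)) : ℝ) : ℂ)) ∂(μp p)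

/-- The survival probability `S(t) = ∫_{|x|_p ≤ 1} u(x,t) dx`. -/
def Sfun (χ : AddChar ℚ_[p] ℂ) (r : ℤ) (α t : ℝ) : ℂ :=
  ∫ x in {x : ℚ_[p] | ‖x‖ ≤ 1}, uball p χ r α t x ∂(μp p)

/-- The solution `u(x,t) = (Z_r(·,t) ∗ φ)(x)` of the Cauchy problem, with `u(x,0) = φ(x)`. -/
def sol (χ : AddChar ℚ_[p] ℂ) (r : ℤ) (α : ℝ) (φ : ℚ_[p] → ℂ) (t : ℝ) (x : ℚ_[p]) : ℂ :=
  if t = 0 then φ x else ∫ y, heatKernel p χ r α t (x-y) * φ y ∂(μp p)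

/-- The pseudodifferential operator `H^α` with symbol `⟨ξ⟩^α - p^{rα}`:
`H^α g = 𝓕⁻¹[(⟨ξ⟩^α - p^{rα}) 𝓕g]`. -/
def Hop (χ : AddChar ℚ_[p] ℂ) (r : ℤ) (α : ℝ) (g : ℚ_[p] → ℂ) (x : ℚ_[p]) : ℂ :=
  ∫ ξ, χ (-(x*ξ)) * (((max ‖ξ‖ ((p:ℝ)^r)) ^ α - (p:ℝ)^((r:ℝ)*α) : ℝ) : ℂ) *
    (∫ y, χ (ξ*y) * g y ∂(μp p)) ∂(μp p)

/-- The Laplace transform `G_r(s)` of the density `g(t)`. -/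
def Gr (χ : AddChar ℚ_[p] ℂ) (r : ℤ) (α : ℝ) (s : ℝ) : ℂ :=
  ∫ y in {y : ℚ_[p] | 1 < ‖y‖ ∧ ‖y‖ ≤ (p:ℝ)^(-r)}, (Kfun p r α y : ℂ) *
    ∫ ξ in {ξ : ℚ_[p] | ‖ξ‖ ≤ 1},
      χ (-(ξ*y)) / ((s:ℂ) + (((max ‖ξ‖ ((p:ℝ)^r)) ^ α - (p:ℝ)^((r:ℝ)*α) : ℝ) : ℂ)) ∂(μp p) ∂(μp p)

namespace HeatAux

open Metric Set

variable {p : ℕ} [hp : Fact p.Prime]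

instance : TopologicalSpace.SeparableSpace ℚ_[p] :=
  ⟨⟨Set.range ((↑) : ℚ → ℚ_[p]), Set.countable_range _, by
    rw [Metric.dense_iff]
    intro x ε hε
    obtain ⟨q, hq⟩ := Padic.rat_dense p x hε
    exact ⟨(q : ℚ_[p]), Metric.mem_ball.2 (by rwa [dist_comm, dist_eq_norm]),
      Set.mem_range_self q⟩⟩⟩

instance : SecondCountableTopology ℚ_[p] :=
  UniformSpace.secondCountable_of_separable _

lemma hp1 : (1:ℝ) < p := by exact_mod_cast hp.out.one_lt

lemma hp0 : (0:ℝ) < p := lt_trans one_pos hp1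

lemma zp_pos (n : ℤ) : (0:ℝ) < (p:ℝ) ^ n := zpow_pos hp0 n

lemma mem_pball {n : ℤ} {x : ℚ_[p]} :
    x ∈ Metric.closedBall (0:ℚ_[p]) ((p:ℝ)^n) ↔ ‖x‖ ≤ (p:ℝ)^n := by
  rw [Metric.mem_closedBall, dist_zero_right]

lemma norm_jump {x : ℚ_[p]} {n : ℤ} (h : (p:ℝ)^n < ‖x‖) : (p:ℝ)^(n+1) ≤ ‖x‖ := by
  by_contra hc
  push_neg at hc
  exact absurd ((Padic.norm_le_pow_iff_norm_lt_pow_add_one x n).2 hc) (not_le.2 h)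

lemma nonarch {x y : ℚ_[p]} {c : ℝ} (hx : ‖x‖ ≤ c) (hy : ‖y‖ ≤ c) : ‖x + y‖ ≤ c :=
  le_trans (Padic.nonarchimedean x y) (max_le hx hy)

end HeatAux
namespace HeatAux

open Metric Set
open scoped ENNReal NNReal

variable {p : ℕ} [hp : Fact p.Prime]

instance : (μp p).IsAddHaarMeasure :=
  Measure.isAddHaarMeasure_addHaarMeasure _

instance : SigmaFinite (μp p) := by
  unfold μp; infer_instance

lemma measure_ball_translate (c : ℚ_[p]) (ρ : ℝ) :
    μp p (Metric.closedBall c ρ) = μp p (Metric.closedBall 0 ρ) := by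
  have h : ((fun y => c + y) ⁻¹' Metric.closedBall c ρ) = Metric.closedBall 0 ρ := by
    ext y
    simp [Metric.mem_closedBall, dist_eq_norm]
  rw [← h, measure_preimage_add]

lemma ball_partition (n : ℤ) :
    Metric.closedBall (0:ℚ_[p]) ((p:ℝ)^n)
      = ⋃ k ∈ Finset.range p,
          Metric.closedBall ((k : ℚ_[p]) * (p:ℚ_[p])^(-n)) ((p:ℝ)^(n-1)) := by
  have hpzero : (p:ℚ_[p]) ≠ 0 := by
    exact_mod_cast hp.out.ne_zero
  ext x
  simp only [Set.mem_iUnion, Finset.mem_range, exists_prop, Metric.mem_closedBall,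
    dist_zero_right, dist_eq_norm, sub_zero]
  constructor
  · intro hx
    have hz : ‖x * (p:ℚ_[p])^n‖ ≤ 1 := by
      rw [norm_mul, Padic.norm_p_zpow]
      calc ‖x‖ * (p:ℝ)^(-n) ≤ (p:ℝ)^n * (p:ℝ)^(-n) := by
            exact mul_le_mul_of_nonneg_right hx (zp_pos (-n)).le
        _ = 1 := by rw [← zpow_add₀ hp0.ne', add_neg_cancel, zpow_zero]
    set z : ℤ_[p] := ⟨x * (p:ℚ_[p])^n, hz⟩ with hzdef
    refine ⟨z.appr 1, by simpa using z.appr_lt 1, ?_⟩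
    have hspec := PadicInt.appr_spec 1 z
    rw [pow_one, Ideal.mem_span_singleton] at hspec
    obtain ⟨c, hc⟩ := hspec
    have hcast : ((z - (z.appr 1 : ℤ_[p]) : ℤ_[p]) : ℚ_[p]) = x * (p:ℚ_[p])^n - (z.appr 1 : ℚ_[p]) := by
      show (z : ℚ_[p]) - ((z.appr 1 : ℤ_[p]) : ℚ_[p]) = _
      push_cast [hzdef]
      ring
    have hnorm : ‖x * (p:ℚ_[p])^n - (z.appr 1 : ℚ_[p])‖ ≤ (p:ℝ)⁻¹ := by
      rw [← hcast, hc]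
      push_cast
      rw [norm_mul, Padic.norm_p]
      calc (p:ℝ)⁻¹ * ‖(c : ℚ_[p])‖ ≤ (p:ℝ)⁻¹ * 1 := by
            exact mul_le_mul_of_nonneg_left c.2 (by positivity)
        _ = (p:ℝ)⁻¹ := mul_one _
    have hpn : (p:ℚ_[p])^n * (p:ℚ_[p])^(-n) = 1 := by
      rw [← zpow_add₀ hpzero]; simp
    have hfact : x - (z.appr 1 : ℚ_[p]) * (p:ℚ_[p])^(-n)
        = (x * (p:ℚ_[p])^n - (z.appr 1 : ℚ_[p])) * (p:ℚ_[p])^(-n) := by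
      calc x - (z.appr 1 : ℚ_[p]) * (p:ℚ_[p])^(-n)
          = x * ((p:ℚ_[p])^n * (p:ℚ_[p])^(-n)) - (z.appr 1 : ℚ_[p]) * (p:ℚ_[p])^(-n) := by
            rw [hpn, mul_one]
        _ = _ := by ring
    rw [hfact, norm_mul, Padic.norm_p_zpow, neg_neg]
    calc ‖x * (p:ℚ_[p])^n - (z.appr 1 : ℚ_[p])‖ * (p:ℝ)^n ≤ (p:ℝ)⁻¹ * (p:ℝ)^n := by
          exact mul_le_mul_of_nonneg_right hnorm (zp_pos n).le
      _ = (p:ℝ)^(n-1) := by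
          rw [← zpow_neg_one, ← zpow_add₀ hp0.ne']; ring_nf
  · rintro ⟨k, hk, hx⟩
    have h1 : ‖(k : ℚ_[p]) * (p:ℚ_[p])^(-n)‖ ≤ (p:ℝ)^n := by
      rw [norm_mul, Padic.norm_p_zpow, neg_neg]
      have : ‖(k : ℚ_[p])‖ ≤ 1 := by
        have := Padic.norm_int_le_one (p := p) (k : ℤ)
        simpa using this
      calc ‖(k : ℚ_[p])‖ * (p:ℝ)^n ≤ 1 * (p:ℝ)^n :=
            mul_le_mul_of_nonneg_right this (zp_pos n).le
        _ = (p:ℝ)^n := one_mul _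
    have h2 : ‖x - (k : ℚ_[p]) * (p:ℚ_[p])^(-n)‖ ≤ (p:ℝ)^n :=
      le_trans hx (zpow_le_zpow_right₀ hp1.le (by omega))
    have := nonarch h2 h1
    simpa using this

lemma ball_disjoint (n : ℤ) : Set.PairwiseDisjoint (↑(Finset.range p) : Set ℕ)
    (fun k => Metric.closedBall ((k : ℚ_[p]) * (p:ℚ_[p])^(-n)) ((p:ℝ)^(n-1))) := by
  intro i hi j hj hij
  simp only [Finset.coe_range, Set.mem_Iio] at hi hj
  refine Set.disjoint_left.2 fun x hxi hxj => hij ?_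
  rw [Metric.mem_closedBall, dist_eq_norm] at hxi hxj
  have hdiff : ‖((i:ℚ_[p]) - (j:ℚ_[p])) * (p:ℚ_[p])^(-n)‖ ≤ (p:ℝ)^(n-1) := by
    have : ((i:ℚ_[p]) - (j:ℚ_[p])) * (p:ℚ_[p])^(-n)
        = (x - (j:ℚ_[p]) * (p:ℚ_[p])^(-n)) + -(x - (i:ℚ_[p]) * (p:ℚ_[p])^(-n)) := by ring
    rw [this]
    exact nonarch hxj (by rwa [norm_neg])
  rw [norm_mul, Padic.norm_p_zpow, neg_neg] at hdiff
  have hdvd : (p:ℤ) ∣ (i:ℤ) - (j:ℤ) := by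
    rw [← Padic.norm_intCast_lt_one_iff]
    by_contra hge
    push_neg at hge
    have hge' : (1:ℝ) ≤ ‖(i:ℚ_[p]) - (j:ℚ_[p])‖ := by
      push_cast at hge ⊢
      exact hge
    have : (p:ℝ)^n ≤ ‖((i:ℚ_[p]) - (j:ℚ_[p]))‖ * (p:ℝ)^n := by
      nth_rewrite 1 [← one_mul ((p:ℝ)^n)]
      exact mul_le_mul_of_nonneg_right hge' (zp_pos n).le
    have hlt : (p:ℝ)^(n-1) < (p:ℝ)^n := zpow_lt_zpow_right₀ hp1 (by omega)
    linarith
  have : (i:ℤ) - (j:ℤ) = 0 := Int.eq_zero_of_abs_lt_dvd hdvd (by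
    rw [abs_lt]; omega)
  omega

lemma vol_ball (n : ℤ) :
    μp p (Metric.closedBall (0:ℚ_[p]) ((p:ℝ)^n)) = (p:ℝ≥0∞)^n := by
  have hpE0 : (p:ℝ≥0∞) ≠ 0 := by exact_mod_cast hp.out.ne_zero
  have hpET : (p:ℝ≥0∞) ≠ ⊤ := ENNReal.natCast_ne_top p
  have key : ∀ m : ℤ, μp p (Metric.closedBall (0:ℚ_[p]) ((p:ℝ)^m))
      = p * μp p (Metric.closedBall (0:ℚ_[p]) ((p:ℝ)^(m-1))) := by
    intro m
    rw [ball_partition m,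
      measure_biUnion_finset (ball_disjoint m) (fun k _ => measurableSet_closedBall)]
    simp only [measure_ball_translate]
    rw [Finset.sum_const, Finset.card_range, nsmul_eq_mul]
  have base : μp p (Metric.closedBall (0:ℚ_[p]) ((p:ℝ)^(0:ℤ))) = 1 := by
    rw [zpow_zero]
    exact Measure.addHaarMeasure_self (K₀ := padicUnitBall p)
  induction n using Int.induction_on with
  | zero => rw [base, zpow_zero]
  | succ k ih =>
      rw [key (k+1)]
      simp only [add_sub_cancel_right] at *
      rw [ih, ENNReal.zpow_add hpE0 hpET k 1, zpow_one, mul_comm]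
  | pred k ih =>
      have hk := key (-k)
      rw [ih] at hk
      have heq : ((-k:ℤ) - 1) = (-(k+1) : ℤ) := by ring
      rw [heq] at hk
      have h2 := congrArg (fun x => (p:ℝ≥0∞)⁻¹ * x) hk
      rw [← mul_assoc, ENNReal.inv_mul_cancel hpE0 hpET, one_mul] at h2
      rw [show (-(k:ℤ) - 1) = (-((k:ℤ)+1)) from by ring, ← h2, ← zpow_neg_one,
        ← ENNReal.zpow_add hpE0 hpET]
      congr 1
      ring

lemma vol_ball_toReal (n : ℤ) :
    (μp p (Metric.closedBall (0:ℚ_[p]) ((p:ℝ)^n))).toReal = (p:ℝ)^n := by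
  rw [vol_ball]
  have h1 : (p:ℝ≥0∞) = ((p:ℝ≥0) : ℝ≥0∞) := by simp
  rw [h1, ← ENNReal.coe_zpow (by exact_mod_cast hp.out.ne_zero)]
  simp [NNReal.coe_zpow]

lemma vol_ball_ne_top (n : ℤ) :
    μp p (Metric.closedBall (0:ℚ_[p]) ((p:ℝ)^n)) ≠ ⊤ := by
  rw [vol_ball]
  exact (ENNReal.zpow_lt_top (by exact_mod_cast hp.out.ne_zero)
    (ENNReal.natCast_ne_top p) n).ne

end HeatAux
namespace HeatAux

open Metric Set
open scoped ENNReal NNReal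

variable {p : ℕ} [hp : Fact p.Prime]
variable {χ : AddChar ℚ_[p] ℂ}

lemma chi_norm_one (hχ : ∀ y : ℚ_[p], χ y = 1 ↔ ‖y‖ ≤ 1) (y : ℚ_[p]) : ‖χ y‖ = 1 := by
  obtain ⟨k, hk⟩ := pow_unbounded_of_one_lt ‖y‖ (hp1 (p := p))
  have hle : ‖((p^k : ℕ) : ℚ_[p]) * y‖ ≤ 1 := by
    push_cast
    rw [norm_mul, Padic.norm_p_pow]
    calc (p:ℝ)^(-(k:ℤ)) * ‖y‖ ≤ (p:ℝ)^(-(k:ℤ)) * (p:ℝ)^(k:ℤ) := by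
          apply mul_le_mul_of_nonneg_left _ (zp_pos (-(k:ℤ))).le
          exact le_of_lt (by exact_mod_cast hk)
      _ = 1 := by rw [← zpow_add₀ (hp0 (p := p)).ne']; simp
  have h1 : χ ((p^k : ℕ) • y) = 1 := (hχ _).2 (by rwa [nsmul_eq_mul])
  rw [AddChar.map_nsmul_eq_pow] at h1
  have h2 : ‖χ y‖ ^ (p^k) = 1 := by
    rw [← norm_pow, h1, norm_one]
  have hk0 : p ^ k ≠ 0 := pow_ne_zero _ hp.out.ne_zero
  rcases (pow_eq_one_iff_cases).1 h2 with h | h | h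
  · exact absurd h hk0
  · exact h
  · have hnn := norm_nonneg (χ y)
    rw [h.1] at hnn
    linarith

lemma chi_continuous (hχ : ∀ y : ℚ_[p], χ y = 1 ↔ ‖y‖ ≤ 1) : Continuous χ := by
  rw [continuous_iff_continuousAt]
  intro y
  have hev : χ =ᶠ[𝓝 y] fun _ => χ y := by
    filter_upwards [Metric.closedBall_mem_nhds y one_pos] with z hz
    have h1 : χ (z - y) = 1 := (hχ _).2 (by
      rw [Metric.mem_closedBall, dist_eq_norm] at hz; exact hz)
    calc χ z = χ (y + (z - y)) := by ring_nf
      _ = χ y * χ (z - y) := AddChar.map_add_eq_mul χ y (z - y)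
      _ = χ y := by rw [h1, mul_one]
  exact hev.continuousAt

lemma char_ball_int (hχ : ∀ y : ℚ_[p], χ y = 1 ↔ ‖y‖ ≤ 1) (n : ℤ) (a : ℚ_[p]) :
    ∫ x in Metric.closedBall (0:ℚ_[p]) ((p:ℝ)^n), χ (a * x) ∂(μp p)
      = if ‖a‖ ≤ (p:ℝ)^(-n) then (((p:ℝ)^n : ℝ) : ℂ) else 0 := by
  split_ifs with h
  · have heq : Set.EqOn (fun x => χ (a * x)) (fun _ => (1:ℂ))
        (Metric.closedBall (0:ℚ_[p]) ((p:ℝ)^n)) := by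
      intro x hx
      refine (hχ _).2 ?_
      rw [norm_mul]
      calc ‖a‖ * ‖x‖ ≤ (p:ℝ)^(-n) * (p:ℝ)^n := by
            apply mul_le_mul h (mem_pball.1 hx) (norm_nonneg _) (zp_pos (-n)).le
        _ = 1 := by rw [← zpow_add₀ (hp0 (p := p)).ne']; simp
    rw [setIntegral_congr_fun measurableSet_closedBall heq, setIntegral_const,
      measureReal_def, vol_ball_toReal]
    simp
  · push_neg at h
    have ha0 : a ≠ 0 := by
      intro h0
      rw [h0, norm_zero] at h
      exact absurd h (not_lt.2 (zp_pos (-n)).le)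
    set u : ℚ_[p] := a⁻¹ * ((p:ℚ_[p]))⁻¹ with hu
    have hpq0 : (p:ℚ_[p]) ≠ 0 := by exact_mod_cast hp.out.ne_zero
    have hau : a * u = ((p:ℚ_[p]))⁻¹ := by
      rw [hu, ← mul_assoc, mul_inv_cancel₀ ha0, one_mul]
    have hnormau : ‖a * u‖ = (p:ℝ) := by
      rw [hau, norm_inv, Padic.norm_p, inv_inv]
    have hchiau : χ (a * u) ≠ 1 := by
      intro hc
      have := (hχ _).1 hc
      rw [hnormau] at this
      exact absurd this (not_le.2 (hp1 (p := p)))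
    have hnu : ‖u‖ ≤ (p:ℝ)^n := by
      have h1 : (p:ℝ)^(-n+1) ≤ ‖a‖ := norm_jump h
      rw [hu, norm_mul, norm_inv, norm_inv, Padic.norm_p, inv_inv]
      have h2 : ‖a‖⁻¹ ≤ (p:ℝ)^(n-1) := by
        have hinv := inv_anti₀ (zp_pos (-n+1)) h1
        rwa [← zpow_neg, show (-(-n+1) : ℤ) = n - 1 from by ring] at hinv
      calc ‖a‖⁻¹ * (p:ℝ) ≤ (p:ℝ)^(n-1) * (p:ℝ) := by
            exact mul_le_mul_of_nonneg_right h2 (hp0 (p := p)).le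
        _ = (p:ℝ)^n := by
            rw [zpow_sub_one₀ (hp0 (p := p)).ne', mul_assoc,
              inv_mul_cancel₀ (hp0 (p := p)).ne', mul_one]
    -- ball is stable under adding u
    have hstab : ∀ x : ℚ_[p], x + u ∈ Metric.closedBall (0:ℚ_[p]) ((p:ℝ)^n)
        ↔ x ∈ Metric.closedBall (0:ℚ_[p]) ((p:ℝ)^n) := by
      intro x
      rw [mem_pball, mem_pball]
      constructor
      · intro hxu
        have := nonarch hxu (by rwa [norm_neg] : ‖-u‖ ≤ (p:ℝ)^n)
        simpa using this
      · intro hx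
        exact nonarch hx hnu
    set g : ℚ_[p] → ℂ :=
      (Metric.closedBall (0:ℚ_[p]) ((p:ℝ)^n)).indicator (fun x => χ (a * x)) with hg
    have hkey : ∀ x, g (x + u) = χ (a * u) * g x := by
      intro x
      by_cases hx : x ∈ Metric.closedBall (0:ℚ_[p]) ((p:ℝ)^n)
      · rw [hg, Set.indicator_of_mem ((hstab x).2 hx), Set.indicator_of_mem hx]
        rw [mul_add, AddChar.map_add_eq_mul]
        ring
      · rw [hg, Set.indicator_of_notMem (fun hc => hx ((hstab x).1 hc)),
          Set.indicator_of_notMem hx, mul_zero]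
    have htrans : ∫ x, g x ∂(μp p) = χ (a * u) * ∫ x, g x ∂(μp p) := by
      conv_lhs => rw [← integral_add_right_eq_self g u]
      simp_rw [hkey]
      rw [integral_const_mul]
    have hzero : ∫ x, g x ∂(μp p) = 0 := by
      by_contra hne
      have heq1 : χ (a * u) * ∫ x, g x ∂(μp p) = 1 * ∫ x, g x ∂(μp p) := by
        rw [← htrans, one_mul]
      exact hchiau (mul_right_cancel₀ hne heq1)
    rw [← integral_indicator measurableSet_closedBall, ← hg, hzero]

end HeatAux
namespace HeatAux

open Metric Set Filter
open scoped ENNReal NNReal Topology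

variable {p : ℕ} [hp : Fact p.Prime]

/-- `((p:ℝ)^(m:ℤ))^α = (p:ℝ)^((m:ℝ)*α)` (rpow). -/
lemma zpow_rpow (m : ℤ) (α : ℝ) : ((p:ℝ)^m) ^ α = (p:ℝ) ^ ((m:ℝ)*α) := by
  rw [← Real.rpow_intCast (p:ℝ) m, ← Real.rpow_mul (hp0 (p := p)).le]

/-- The symbol vanishes on the ball of radius `p^r`. -/
lemma symbol_zero {r : ℤ} {α : ℝ} {ξ : ℚ_[p]} (hξ : ‖ξ‖ ≤ (p:ℝ)^r) :
    (max ‖ξ‖ ((p:ℝ)^r)) ^ α - (p:ℝ) ^ ((r:ℝ)*α) = 0 := by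
  rw [max_eq_right hξ, zpow_rpow, sub_self]

/-- The real heat-kernel weight. -/
lemma Efun_nonneg (r : ℤ) (α t : ℝ) (ξ : ℚ_[p]) :
    0 ≤ Real.exp (-(t * ((max ‖ξ‖ ((p:ℝ)^r)) ^ α - (p:ℝ) ^ ((r:ℝ)*α)))) :=
  (Real.exp_pos _).le

lemma Efun_continuous (r : ℤ) (α t : ℝ) :
    Continuous fun ξ : ℚ_[p] =>
      Real.exp (-(t * ((max ‖ξ‖ ((p:ℝ)^r)) ^ α - (p:ℝ) ^ ((r:ℝ)*α)))) := by
  have h1 : Continuous fun ξ : ℚ_[p] => max ‖ξ‖ ((p:ℝ)^r) :=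
    continuous_norm.max continuous_const
  have h2 : Continuous fun ξ : ℚ_[p] => (max ‖ξ‖ ((p:ℝ)^r)) ^ α := by
    rw [continuous_iff_continuousAt]
    intro ξ
    have hpos : (0:ℝ) < max ‖ξ‖ ((p:ℝ)^r) := lt_max_of_lt_right (zp_pos r)
    exact ContinuousAt.comp (g := fun x : ℝ => x ^ α)
      (Real.continuousAt_rpow_const _ α (Or.inl hpos.ne')) h1.continuousAt
  exact Real.continuous_exp.comp ((continuous_const.mul (h2.sub continuous_const)).neg)

/-- Summability of the dominating series. -/
lemma summable_dom (r : ℤ) {α t : ℝ} (hα : 0 < α) (ht : 0 < t) :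
    Summable (fun k : ℕ =>
      Real.exp (-(t * (((p:ℝ)^(r+(k:ℤ))) ^ α - (p:ℝ) ^ ((r:ℝ)*α)))) * (p:ℝ)^(r+(k:ℤ)+1)) := by
  set q : ℝ := (p:ℝ)^α with hq
  have hq1 : 1 < q := by
    rw [hq]
    exact Real.one_lt_rpow_iff_of_pos (hp0 (p := p)) |>.2 (Or.inl ⟨hp1 (p := p), hα⟩)
  set P : ℝ := (p:ℝ) ^ ((r:ℝ)*α) with hP
  have hPpos : 0 < P := Real.rpow_pos_of_pos (hp0 (p := p)) _
  have hterm : ∀ k : ℕ, ((p:ℝ)^(r+(k:ℤ))) ^ α = P * q ^ k := by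
    intro k
    rw [zpow_rpow, hP, hq, ← Real.rpow_natCast ((p:ℝ)^α) k, ← Real.rpow_mul (hp0 (p := p)).le,
      ← Real.rpow_add (hp0 (p := p))]
    congr 1
    push_cast
    ring
  set b : ℕ → ℝ := fun k =>
    Real.exp (-(t * (((p:ℝ)^(r+(k:ℤ))) ^ α - P))) * (p:ℝ)^(r+(k:ℤ)+1) with hb
  have hbpos : ∀ k, 0 < b k := fun k =>
    mul_pos (Real.exp_pos _) (zp_pos _)
  have hratio : ∀ k : ℕ, b (k+1) = b k * ((p:ℝ) * Real.exp (-(t * P * (q-1) * q^k))) := by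
    intro k
    rw [hb]
    simp only
    rw [hterm, hterm]
    have hexp : -(t*(P*q^(k+1) - P)) = -(t*(P*q^k - P)) + -(t*P*(q-1)*q^k) := by ring
    push_cast
    rw [show r + ((k:ℤ)+1) + 1 = (r + (k:ℤ) + 1) + 1 from by ring,
      zpow_add₀ (hp0 (p := p)).ne' _ 1, zpow_one, hexp, Real.exp_add]
    ring
  have htend : Tendsto (fun k : ℕ => (p:ℝ) * Real.exp (-(t * P * (q-1) * q^k)))
      atTop (𝓝 0) := by
    have hc : 0 < t * P * (q - 1) := by
      apply mul_pos (mul_pos ht hPpos)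
      linarith
    have h1 : Tendsto (fun k : ℕ => (q:ℝ)^k) atTop atTop :=
      tendsto_pow_atTop_atTop_of_one_lt hq1
    have h2 : Tendsto (fun k : ℕ => -(t * P * (q-1)) * q^k) atTop atBot :=
      Tendsto.const_mul_atTop_of_neg (by linarith) h1
    have h3 : Tendsto (fun k : ℕ => Real.exp (-(t * P * (q-1) * q^k))) atTop (𝓝 0) := by
      refine Real.tendsto_exp_atBot.comp ?_
      convert h2 using 2 with k
      ring
    have := h3.const_mul (p:ℝ)
    simpa using this
  have hev : ∀ᶠ k in atTop, ‖b (k+1)‖ ≤ (1/2 : ℝ) * ‖b k‖ := by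
    filter_upwards [htend.eventually_le_const (by norm_num : (0:ℝ) < 1/2)] with k hk
    rw [Real.norm_eq_abs, Real.norm_eq_abs, abs_of_pos (hbpos _), abs_of_pos (hbpos _),
      hratio k, mul_comm (b k)]
    exact mul_le_mul_of_nonneg_right hk (hbpos k).le
  exact summable_of_ratio_norm_eventually_le (by norm_num) hev

end HeatAux
namespace HeatAux

open Metric Set Filter
open scoped ENNReal NNReal Topology

variable {p : ℕ} [hp : Fact p.Prime]

lemma ennreal_zpow_eq (m : ℤ) : (p:ℝ≥0∞)^m = ENNReal.ofReal ((p:ℝ)^m) := by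
  have hne0 : (p:ℝ≥0) ≠ 0 := by exact_mod_cast hp.out.ne_zero
  have h1 : ((p:ℝ)^m) = (((p:ℝ≥0)^m : ℝ≥0) : ℝ) := by
    rw [NNReal.coe_zpow]
    norm_num
  rw [h1, ENNReal.ofReal_coe_nnreal, ENNReal.coe_zpow hne0]
  norm_num

lemma Efun_le_one (r : ℤ) {α t : ℝ} (hα : 0 < α) (ht : 0 < t) (ξ : ℚ_[p]) :
    Real.exp (-(t * ((max ‖ξ‖ ((p:ℝ)^r)) ^ α - (p:ℝ) ^ ((r:ℝ)*α)))) ≤ 1 := by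
  rw [Real.exp_le_one_iff, neg_nonpos]
  apply mul_nonneg ht.le
  rw [sub_nonneg, ← zpow_rpow]
  exact Real.rpow_le_rpow (zp_pos r).le (le_max_right _ _) hα.le

set_option maxHeartbeats 1000000 in
lemma Efun_integrable (r : ℤ) {α t : ℝ} (hα : 0 < α) (ht : 0 < t) :
    MeasureTheory.Integrable (fun ξ : ℚ_[p] =>
      Real.exp (-(t * ((max ‖ξ‖ ((p:ℝ)^r)) ^ α - (p:ℝ) ^ ((r:ℝ)*α))))) (μp p) := by
  classical
  set P : ℝ := (p:ℝ) ^ ((r:ℝ)*α) with hP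
  set E : ℚ_[p] → ℝ := fun ξ => Real.exp (-(t * ((max ‖ξ‖ ((p:ℝ)^r)) ^ α - P))) with hE
  refine ⟨(Efun_continuous r α t).aestronglyMeasurable, ?_⟩
  set T : ℕ → Set ℚ_[p] := fun k => Metric.closedBall 0 ((p:ℝ)^(r+(k:ℤ))) with hT
  have hTmono : Monotone T := by
    intro i j hij
    apply Metric.closedBall_subset_closedBall
    exact zpow_le_zpow_right₀ (hp1 (p := p)).le (by omega)
  have hTmeas : ∀ k, MeasurableSet (T k) := fun k => measurableSet_closedBall
  have hTunion : (⋃ k, T k) = Set.univ := by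
    rw [Set.eq_univ_iff_forall]
    intro ξ
    obtain ⟨n, hn⟩ := pow_unbounded_of_one_lt ‖ξ‖ (hp1 (p := p))
    refine Set.mem_iUnion.2 ⟨((n:ℤ) - r).toNat, ?_⟩
    rw [hT, mem_pball]
    have h1 : ((n:ℤ)) ≤ r + (((n:ℤ) - r).toNat : ℤ) := by
      have := Int.self_le_toNat ((n:ℤ) - r)
      omega
    calc ‖ξ‖ ≤ (p:ℝ)^(n:ℕ) := hn.le
      _ = (p:ℝ)^((n:ℕ):ℤ) := by rw [zpow_natCast]
      _ ≤ (p:ℝ)^(r + (((n:ℤ) - r).toNat : ℤ)) := zpow_le_zpow_right₀ (hp1 (p := p)).le h1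
  set e : ℕ → ℝ := fun k =>
    Nat.casesOn k 1 (fun j => Real.exp (-(t * (((p:ℝ)^(r+(j:ℤ))) ^ α - P)))) with he
  have he_nonneg : ∀ k, 0 ≤ e k := by
    intro k
    cases k with
    | zero => norm_num [he]
    | succ j => exact (Real.exp_pos _).le
  set c : ℕ → ℝ≥0∞ := fun k => ENNReal.ofReal (e k) * (p:ℝ≥0∞)^(r+(k:ℤ)) with hc
  have hbd : ∀ k, ∀ ξ ∈ disjointed T k, E ξ ≤ e k := by
    intro k ξ hξ
    cases k with
    | zero => exact Efun_le_one r hα ht ξ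
    | succ j =>
        rw [disjointed_add_one, hTmono.partialSups_eq] at hξ
        have hξ2 : ξ ∉ T j := hξ.2
        rw [hT, mem_pball] at hξ2
        push_neg at hξ2
        have hle : ((p:ℝ)^(r+(j:ℤ))) ^ α ≤ (max ‖ξ‖ ((p:ℝ)^r)) ^ α := by
          apply Real.rpow_le_rpow (zp_pos _).le _ hα.le
          exact le_trans hξ2.le (le_max_left _ _)
        rw [hE]
        simp only
        apply Real.exp_le_exp.2
        simp only [neg_le_neg_iff]
        apply mul_le_mul_of_nonneg_left _ ht.le
        linarith
  have hbound : ∀ k, (∫⁻ ξ in disjointed T k, ‖E ξ‖₊ ∂(μp p)) ≤ c k := by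
    intro k
    calc (∫⁻ ξ in disjointed T k, ‖E ξ‖₊ ∂(μp p))
        ≤ ∫⁻ _ in disjointed T k, ENNReal.ofReal (e k) ∂(μp p) := by
          apply MeasureTheory.setLIntegral_mono measurable_const
          intro ξ hξ
          rw [← enorm_eq_nnnorm, Real.enorm_eq_ofReal (Real.exp_pos _).le]
          exact ENNReal.ofReal_le_ofReal (hbd k ξ hξ)
      _ = ENNReal.ofReal (e k) * μp p (disjointed T k) := MeasureTheory.setLIntegral_const _ _
      _ ≤ ENNReal.ofReal (e k) * μp p (T k) :=
          mul_le_mul_right (measure_mono (disjointed_subset T k)) _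
      _ = c k := by rw [hc, hT, vol_ball]
  have hsum := summable_dom (p := p) r hα ht
  have hcsum : (∑' k, c k) < ⊤ := by
    rw [tsum_eq_zero_add' ENNReal.summable]
    apply ENNReal.add_lt_top.2
    constructor
    · rw [hc]
      simp only
      exact ENNReal.mul_lt_top ENNReal.ofReal_lt_top
        (ENNReal.zpow_lt_top (by exact_mod_cast hp.out.ne_zero) (ENNReal.natCast_ne_top p) _)
    · have hck : ∀ k : ℕ, c (k+1) = ENNReal.ofReal
          (Real.exp (-(t * (((p:ℝ)^(r+(k:ℤ))) ^ α - P))) * (p:ℝ)^(r+(k:ℤ)+1)) := by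
        intro k
        have he1 : e (k+1) = Real.exp (-(t * (((p:ℝ)^(r+(k:ℤ))) ^ α - P))) := rfl
        rw [hc]
        simp only
        rw [he1, ENNReal.ofReal_mul (Real.exp_pos _).le, ennreal_zpow_eq]
        congr 2
        push_cast
        ring
      simp_rw [hck]
      rw [← ENNReal.ofReal_tsum_of_nonneg (fun k => by positivity) hsum]
      exact ENNReal.ofReal_lt_top
  show (∫⁻ ξ, ‖E ξ‖₊ ∂(μp p)) < ⊤
  calc (∫⁻ ξ, ‖E ξ‖₊ ∂(μp p))
      = ∫⁻ ξ in ⋃ k, disjointed T k, ‖E ξ‖₊ ∂(μp p) := by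
        rw [iUnion_disjointed, hTunion, MeasureTheory.Measure.restrict_univ]
    _ = ∑' k, ∫⁻ ξ in disjointed T k, ‖E ξ‖₊ ∂(μp p) :=
        MeasureTheory.lintegral_iUnion (MeasurableSet.disjointed hTmeas)
          (disjoint_disjointed T) _
    _ ≤ ∑' k, c k := ENNReal.tsum_le_tsum hbound
    _ < ⊤ := hcsum

end HeatAux
namespace HeatAux

open Metric Set Filter MeasureTheory
open scoped ENNReal NNReal Topology

variable {p : ℕ} [hp : Fact p.Prime]

lemma cexp_continuous (r : ℤ) (α t : ℝ) :
    Continuous fun ξ : ℚ_[p] =>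
      Complex.exp (-((t * ((max ‖ξ‖ ((p:ℝ)^r)) ^ α - (p:ℝ) ^ ((r:ℝ)*α)) : ℝ) : ℂ)) := by
  have h1 : Continuous fun ξ : ℚ_[p] => max ‖ξ‖ ((p:ℝ)^r) :=
    continuous_norm.max continuous_const
  have h2 : Continuous fun ξ : ℚ_[p] => (max ‖ξ‖ ((p:ℝ)^r)) ^ α := by
    rw [continuous_iff_continuousAt]
    intro ξ
    have hpos : (0:ℝ) < max ‖ξ‖ ((p:ℝ)^r) := lt_max_of_lt_right (zp_pos r)
    exact ContinuousAt.comp (g := fun x : ℝ => x ^ α)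
      (Real.continuousAt_rpow_const _ α (Or.inl hpos.ne')) h1.continuousAt
  have h3 : Continuous fun ξ : ℚ_[p] =>
      (t * ((max ‖ξ‖ ((p:ℝ)^r)) ^ α - (p:ℝ) ^ ((r:ℝ)*α)) : ℝ) :=
    continuous_const.mul (h2.sub continuous_const)
  exact Complex.continuous_exp.comp ((Complex.continuous_ofReal.comp h3).neg)

end HeatAux
theorem stmt3 (χ : AddChar ℚ_[p] ℂ) (hχ : ∀ y : ℚ_[p], χ y = 1 ↔ ‖y‖ ≤ 1) (r : ℤ) (α t : ℝ) (hα : 0 < α) (ht : 0 < t) :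
    (∫ x, heatKernel p χ r α t x ∂(μp p)) = 1 ∧
    (∀ x : ℚ_[p], (p:ℝ)^(-r) < ‖x‖ → heatKernel p χ r α t x = 0) ∧
    (∫ x in {x : ℚ_[p] | ‖x‖ ≤ (p:ℝ)^(-r)}, heatKernel p χ r α t x ∂(μp p)) = 1 := by
  classical
  have hp1 : (1:ℝ) < p := HeatAux.hp1
  have hp0 : (0:ℝ) < p := HeatAux.hp0
  have hset : {x : ℚ_[p] | ‖x‖ ≤ (p:ℝ)^(-r)} = Metric.closedBall (0:ℚ_[p]) ((p:ℝ)^(-r)) := by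
    ext x
    simp [Metric.mem_closedBall, dist_zero_right]
  set Cx : ℚ_[p] → ℂ := fun ξ =>
    Complex.exp (-((t * ((max ‖ξ‖ ((p:ℝ)^r)) ^ α - (p:ℝ) ^ ((r:ℝ)*α)) : ℝ) : ℂ)) with hCx
  set F : ℚ_[p] → ℚ_[p] → ℂ := fun x ξ => χ (-(x*ξ)) * Cx ξ with hF
  have hkdef : ∀ x, heatKernel p χ r α t x = ∫ ξ, F x ξ ∂(μp p) := fun x => rfl
  have hexp1 : ∀ ξ : ℚ_[p], ‖ξ‖ ≤ (p:ℝ)^r → Cx ξ = 1 := by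
    intro ξ hξ
    rw [hCx]
    simp only
    rw [HeatAux.symbol_zero hξ]
    norm_num
  -- Part 2 : support property
  have part2 : ∀ x : ℚ_[p], (p:ℝ)^(-r) < ‖x‖ → heatKernel p χ r α t x = 0 := by
    intro x hx
    have hx0 : x ≠ 0 := by
      intro h0
      rw [h0, norm_zero] at hx
      exact absurd hx (not_lt.2 (HeatAux.zp_pos (-r)).le)
    set u : ℚ_[p] := x⁻¹ * ((p:ℚ_[p]))⁻¹ with hu
    have hxu : x * u = ((p:ℚ_[p]))⁻¹ := by
      rw [hu, ← mul_assoc, mul_inv_cancel₀ hx0, one_mul]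
    have hnu : ‖u‖ ≤ (p:ℝ)^r := by
      have h1 : (p:ℝ)^(-r+1) ≤ ‖x‖ := HeatAux.norm_jump hx
      rw [hu, norm_mul, norm_inv, norm_inv, Padic.norm_p, inv_inv]
      have h2 : ‖x‖⁻¹ ≤ (p:ℝ)^(r-1) := by
        have hinv := inv_anti₀ (HeatAux.zp_pos (-r+1)) h1
        rwa [← zpow_neg, show (-(-r+1) : ℤ) = r - 1 from by ring] at hinv
      calc ‖x‖⁻¹ * (p:ℝ) ≤ (p:ℝ)^(r-1) * (p:ℝ) :=
            mul_le_mul_of_nonneg_right h2 hp0.le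
        _ = (p:ℝ)^r := by
            rw [zpow_sub_one₀ hp0.ne', mul_assoc, inv_mul_cancel₀ hp0.ne', mul_one]
    have hmax : ∀ ξ : ℚ_[p], max ‖ξ + u‖ ((p:ℝ)^r) = max ‖ξ‖ ((p:ℝ)^r) := by
      intro ξ
      rcases le_or_gt ‖ξ‖ ((p:ℝ)^r) with hcase | hcase
      · rw [max_eq_right hcase, max_eq_right (HeatAux.nonarch hcase hnu)]
      · have hlt : ‖u‖ < ‖ξ‖ := lt_of_le_of_lt hnu hcase
        have heq : ‖ξ + u‖ = ‖ξ‖ := by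
          rw [Padic.add_eq_max_of_ne hlt.ne']
          exact max_eq_left hlt.le
        rw [heq]
    have hGkey : ∀ ξ, F x (ξ + u) = χ (-(x*u)) * F x ξ := by
      intro ξ
      rw [hF]
      simp only
      rw [hCx]
      simp only
      rw [hmax ξ]
      rw [show -(x*(ξ+u)) = -(x*ξ) + -(x*u) from by ring, AddChar.map_add_eq_mul]
      ring
    have htrans : ∫ ξ, F x ξ ∂(μp p) = χ (-(x*u)) * ∫ ξ, F x ξ ∂(μp p) := by
      conv_lhs => rw [← MeasureTheory.integral_add_right_eq_self (F x) u]
      simp_rw [hGkey]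
      rw [MeasureTheory.integral_const_mul]
    have hchi : χ (-(x*u)) ≠ 1 := by
      intro hc
      have h1 := (hχ _).1 hc
      rw [norm_neg, hxu, norm_inv, Padic.norm_p, inv_inv] at h1
      exact absurd h1 (not_le.2 hp1)
    have hzero : ∫ ξ, F x ξ ∂(μp p) = 0 := by
      by_contra hne
      have heq1 : χ (-(x*u)) * ∫ ξ, F x ξ ∂(μp p) = 1 * ∫ ξ, F x ξ ∂(μp p) := by
        rw [← htrans, one_mul]
      exact hchi (mul_right_cancel₀ hne heq1)
    rw [hkdef, hzero]
  -- Part 3 : Fubini computation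
  have part3 : (∫ x in Metric.closedBall (0:ℚ_[p]) ((p:ℝ)^(-r)),
      heatKernel p χ r α t x ∂(μp p)) = 1 := by
    set B : Set ℚ_[p] := Metric.closedBall (0:ℚ_[p]) ((p:ℝ)^(-r)) with hB
    haveI : MeasureTheory.IsFiniteMeasure ((μp p).restrict B) := by
      constructor
      rw [MeasureTheory.Measure.restrict_apply_univ]
      exact (HeatAux.vol_ball_ne_top (-r)).lt_top
    have hEint := HeatAux.Efun_integrable (p := p) r hα ht
    have hFnorm : ∀ x ξ : ℚ_[p], ‖F x ξ‖
        = Real.exp (-(t * ((max ‖ξ‖ ((p:ℝ)^r)) ^ α - (p:ℝ) ^ ((r:ℝ)*α)))) := by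
      intro x ξ
      rw [hF]
      simp only
      rw [norm_mul, HeatAux.chi_norm_one hχ, one_mul, hCx]
      simp only
      rw [Complex.norm_exp]
      norm_num
    have hcont : Continuous (Function.uncurry F) := by
      apply Continuous.mul
      · exact (HeatAux.chi_continuous hχ).comp ((continuous_fst.mul continuous_snd).neg)
      · exact (HeatAux.cexp_continuous r α t).comp continuous_snd
    have hdom : MeasureTheory.Integrable (fun z : ℚ_[p] × ℚ_[p] => (1:ℝ) *
        Real.exp (-(t * ((max ‖z.2‖ ((p:ℝ)^r)) ^ α - (p:ℝ) ^ ((r:ℝ)*α)))))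
        (((μp p).restrict B).prod (μp p)) :=
      (MeasureTheory.integrable_const 1).mul_prod hEint
    have hInt : MeasureTheory.Integrable (Function.uncurry F)
        (((μp p).restrict B).prod (μp p)) := by
      apply hdom.mono' hcont.aestronglyMeasurable
      filter_upwards with z
      rw [Function.uncurry_apply_pair, hFnorm z.1 z.2, one_mul]
    have hswap := MeasureTheory.integral_integral_swap hInt
    have hinner : ∀ ξ : ℚ_[p], (∫ x in B, F x ξ ∂(μp p))
        = (if ‖ξ‖ ≤ (p:ℝ)^r then (((p:ℝ)^(-r) : ℝ) : ℂ) else 0) * Cx ξ := by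
      intro ξ
      have hfx : ∀ x : ℚ_[p], F x ξ = χ ((-ξ) * x) * Cx ξ := by
        intro x
        rw [hF]
        simp only
        congr 2
        ring
      simp_rw [hfx]
      rw [MeasureTheory.integral_mul_const, HeatAux.char_ball_int hχ (-r) (-ξ)]
      congr 1
      rw [norm_neg, neg_neg]
    calc (∫ x in B, heatKernel p χ r α t x ∂(μp p))
        = ∫ x in B, (∫ ξ, F x ξ ∂(μp p)) ∂(μp p) := by
          apply MeasureTheory.setIntegral_congr_fun (hB ▸ measurableSet_closedBall)
          intro x _
          exact hkdef x
      _ = ∫ ξ, (∫ x in B, F x ξ ∂(μp p)) ∂(μp p) := hswap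
      _ = ∫ ξ, (Metric.closedBall (0:ℚ_[p]) ((p:ℝ)^r)).indicator
            (fun _ => (((p:ℝ)^(-r) : ℝ) : ℂ)) ξ ∂(μp p) := by
          apply MeasureTheory.integral_congr_ae
          filter_upwards with ξ
          rw [hinner ξ]
          by_cases hξ : ‖ξ‖ ≤ (p:ℝ)^r
          · rw [if_pos hξ, Set.indicator_of_mem (HeatAux.mem_pball.2 hξ), hexp1 ξ hξ, mul_one]
          · rw [if_neg hξ, Set.indicator_of_notMem
              (fun hc => hξ (HeatAux.mem_pball.1 hc)), zero_mul]
      _ = ∫ ξ in Metric.closedBall (0:ℚ_[p]) ((p:ℝ)^r),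
            (((p:ℝ)^(-r) : ℝ) : ℂ) ∂(μp p) :=
          MeasureTheory.integral_indicator measurableSet_closedBall
      _ = 1 := by
          rw [MeasureTheory.setIntegral_const, measureReal_def, HeatAux.vol_ball_toReal,
            Complex.real_smul, ← Complex.ofReal_mul, ← zpow_add₀ hp0.ne',
            add_neg_cancel, zpow_zero, Complex.ofReal_one]
  -- Part 1 from parts 2 and 3
  have part1 : (∫ x, heatKernel p χ r α t x ∂(μp p)) = 1 := by
    have hind : ∀ x, heatKernel p χ r α t x
        = (Metric.closedBall (0:ℚ_[p]) ((p:ℝ)^(-r))).indicator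
            (heatKernel p χ r α t) x := by
      intro x
      by_cases hx : x ∈ Metric.closedBall (0:ℚ_[p]) ((p:ℝ)^(-r))
      · rw [Set.indicator_of_mem hx]
      · rw [Set.indicator_of_notMem hx]
        exact part2 x (not_le.1 (fun hc => hx (HeatAux.mem_pball.2 hc)))
    calc (∫ x, heatKernel p χ r α t x ∂(μp p))
        = ∫ x, (Metric.closedBall (0:ℚ_[p]) ((p:ℝ)^(-r))).indicator
            (heatKernel p χ r α t) x ∂(μp p) :=
          MeasureTheory.integral_congr_ae (Filter.Eventually.of_forall hind)
      _ = ∫ x in Metric.closedBall (0:ℚ_[p]) ((p:ℝ)^(-r)),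
            heatKernel p χ r α t x ∂(μp p) :=
          MeasureTheory.integral_indicator measurableSet_closedBall
      _ = 1 := part3
  exact ⟨part1, part2, by rw [hset]; exact part3⟩

end
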